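/- arXiv:2510.03899 — 2 statements merged into one kernel-verified Lean document; each statement's English description precedes it below -/
import Mathlib

section
/- Let T = (V, E) be a finite tree with a distinguished terminal t ∈ V, edge weights w(e) ≥ 1 for e ∈ E, subsets B, R ⊆ V, and α ∈ [0, 1]. Then the minimum, over all temporal labelings λ of T such that in T_λ at least α·|B| nodes of B and at least α·|R| nodes of R temporally reach t, of the weighted cost Σ_{({u,v},τ) ∈ E_λ} w({u,v}) equals the minimum of w(S) = Σ_{e ∈ S} w(e) over all connected subtrees S of T containing t with |V(S) ∩ B| ≥ α·|B| and |V(S) ∩ R| ≥ α·|R| (both minima are attained, e.g. with S = T). -/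
/-- A temporal path from `u` to `w`: `p` temporal edges with strictly increasing
timestamps. -/
def IsTemporalPath {V : Type*} (E : Set (Sym2 V × ℕ)) (u w : V)
    (p : ℕ) (vtx : Fin (p + 1) → V) (ts : Fin p → ℕ) : Prop :=
  vtx 0 = u ∧ vtx (Fin.last p) = w ∧ StrictMono ts ∧
    ∀ i : Fin p, (s(vtx i.castSucc, vtx i.succ), ts i) ∈ E

/-- `w` is temporally reachable from `u`. -/
def TemporallyReachable {V : Type*} (E : Set (Sym2 V × ℕ)) (u w : V) : Prop :=
  u = w ∨ ∃ (p : ℕ) (vtx : Fin (p + 1) → V) (ts : Fin p → ℕ),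
    IsTemporalPath E u w p vtx ts

/-- The temporal edges of the temporal graph `G_λ` induced by a temporal labeling `lab`
of the static graph `G`. -/
def inducedTemporalEdges {V : Type*} (G : SimpleGraph V) (lab : Sym2 V → Finset ℕ) :
    Set (Sym2 V × ℕ) :=
  {q | q.1 ∈ G.edgeSet ∧ q.2 ∈ lab q.1}


open SimpleGraph

set_option linter.unusedSectionVars false
section Helpers

variable {V : Type*} [DecidableEq V] {T : SimpleGraph V} {t : V}

/-- In a tree, any path has length equal to the distance. -/
lemma tree_path_length (hT : T.IsTree) {u v : V} {p : T.Walk u v} (hp : p.IsPath) :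
    p.length = T.dist u v := by
  obtain ⟨q, hq⟩ := (hT.isConnected u v).exists_walk_length_eq_dist
  have huniq : p = q.bypass := (hT.existsUnique_path u v).unique hp q.bypass_isPath
  refine le_antisymm ?_ (SimpleGraph.dist_le p)
  calc p.length = q.bypass.length := by rw [huniq]
    _ ≤ q.length := q.length_bypass_le
    _ = T.dist u v := hq

/-- Along a path to `t` in a tree, the distance to `t` decreases. -/
lemma tree_dist_getVert (hT : T.IsTree) {u : V} (p : T.Walk u t) (hp : p.IsPath) :
    ∀ i, T.dist (p.getVert i) t = p.length - i := by
  induction p with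
  | nil => intro i; simp [SimpleGraph.Walk.getVert]
  | @cons a b c h q ih =>
    intro i
    cases i with
    | zero =>
      rw [SimpleGraph.Walk.getVert_zero]
      simpa using (tree_path_length hT hp).symm
    | succ i =>
      rw [SimpleGraph.Walk.getVert_cons_succ]
      rw [ih hp.of_cons i, SimpleGraph.Walk.length_cons]; omega


/-- From connectivity of the induced subgraph, get a path staying in `s`. -/
lemma exists_path_support_subset {s : Set V}
    (hconn : (SimpleGraph.induce s T).Connected) {u : V} (hu : u ∈ s) (ht : t ∈ s) :
    ∃ p : T.Walk u t, p.IsPath ∧ ∀ x ∈ p.support, x ∈ s := by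
  obtain ⟨W⟩ := hconn ⟨u, hu⟩ ⟨t, ht⟩
  let W' : T.Walk u t := W.map (SimpleGraph.Embedding.induce s).toHom
  refine ⟨W'.bypass, W'.bypass_isPath, fun x hx => ?_⟩
  have hx' : x ∈ W'.support := W'.support_bypass_subset hx
  rw [show W'.support = _ from SimpleGraph.Walk.support_map _ _] at hx'
  obtain ⟨y, _, rfl⟩ := List.mem_map.mp hx'
  exact y.2

/-- If every vertex of `s` has a walk to `t` staying in `s`, the induced graph is
connected. -/
lemma induce_connected_of_walks {s : Set V} (ht : t ∈ s)
    (h : ∀ u ∈ s, ∃ p : T.Walk u t, ∀ x ∈ p.support, x ∈ s) :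
    (SimpleGraph.induce s T).Connected := by
  have key : ∀ {a b : V} (p : T.Walk a b) (hs : ∀ x ∈ p.support, x ∈ s),
      (SimpleGraph.induce s T).Reachable
        ⟨a, hs a p.start_mem_support⟩ ⟨b, hs b p.end_mem_support⟩ := by
    intro a b p
    induction p with
    | nil => intro _; rfl
    | @cons a b c hadj q ih =>
      intro hs
      have hs' : ∀ x ∈ q.support, x ∈ s := fun x hx => hs x (by simp [hx])
      have hadj' : (SimpleGraph.induce s T).Adj
          ⟨a, hs a (SimpleGraph.Walk.start_mem_support _)⟩
          ⟨b, hs' b q.start_mem_support⟩ := hadj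
      exact hadj'.reachable.trans (ih hs')
  have : Nonempty s := ⟨⟨t, ht⟩⟩
  refine ⟨fun a b => ?_⟩
  obtain ⟨pa, hpa⟩ := h a.1 a.2
  obtain ⟨pb, hpb⟩ := h b.1 b.2
  exact (key pa hpa).trans (key pb hpb).symm

/-- A temporally reachable vertex has a static walk to `t` whose support vertices all
temporally reach `t` and whose edges all carry at least one timestamp. -/
lemma temporal_reach_walk {lab : Sym2 V → Finset ℕ} {u : V}
    (hr : TemporallyReachable (inducedTemporalEdges T lab) u t) :
    ∃ W : T.Walk u t,
      (∀ x ∈ W.support, TemporallyReachable (inducedTemporalEdges T lab) x t) ∧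
      ∀ e ∈ W.edges, (lab e).Nonempty := by
  rcases hr with rfl | ⟨p, vtx, ts, htp⟩
  · exact ⟨SimpleGraph.Walk.nil, by rintro x hx; simp at hx; subst hx; exact Or.inl rfl,
      by simp⟩

  induction p generalizing u with
  | zero =>
    obtain ⟨h0, hlast, _, _⟩ := htp
    have : u = t := by rw [← h0, ← hlast]; rfl
    subst this
    exact ⟨SimpleGraph.Walk.nil, by rintro x hx; simp at hx; subst hx; exact Or.inl rfl,
      by simp⟩
  | succ n ih =>
    obtain ⟨h0, hlast, hmono, hmem⟩ := htp
    have hfirst := hmem 0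
    have hadj : T.Adj (vtx 0) (vtx 1) := by
      have := hfirst.1
      simpa using this
    have htail : IsTemporalPath (inducedTemporalEdges T lab) (vtx 1) t n
        (vtx ∘ Fin.succ) (ts ∘ Fin.succ) := by
      refine ⟨rfl, ?_, hmono.comp (Fin.strictMono_succ), ?_⟩
      · show vtx (Fin.last n).succ = t
        rw [Fin.succ_last]; exact hlast
      · intro i
        have := hmem i.succ
        simpa only [Function.comp_apply, Fin.succ_castSucc] using this
    obtain ⟨W', hW's, hW'e⟩ := ih (vtx ∘ Fin.succ) (ts ∘ Fin.succ) htail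
    subst h0
    refine ⟨SimpleGraph.Walk.cons hadj W', ?_, ?_⟩
    · intro x hx
      rw [SimpleGraph.Walk.support_cons] at hx
      rcases List.mem_cons.mp hx with rfl | hx
      · exact Or.inr ⟨n + 1, vtx, ts, rfl, hlast, hmono, hmem⟩
      · exact hW's x hx
    · intro e he
      rw [SimpleGraph.Walk.edges_cons] at he
      rcases List.mem_cons.mp he with rfl | he
      · exact ⟨ts 0, by simpa using hfirst.2⟩
      · exact hW'e e he

end Helpers


/-- on a finite tree `T` with terminal `t`, edge weights `w ≥ 1`, groups
`B, R` and `α ∈ [0,1]`, the minimum of the weighted cost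
`Σ_{({u,v},τ) ∈ E_λ} w({u,v}) = Σ_e |λ(e)|·w(e)` over all temporal labelings `λ` such
that at least `α·|B|` nodes of `B` and at least `α·|R|` nodes of `R` temporally reach `t`
in `T_λ`, equals the minimum of `w(S) = Σ_{e ∈ S} w(e)` over all connected subtrees `S`
of `T` containing `t` with `|V(S) ∩ B| ≥ α·|B|` and `|V(S) ∩ R| ≥ α·|R|`; both minima are
attained. -/
theorem fml_tree_equals_subtree_min {V : Type*} [Fintype V] [DecidableEq V]
    (T : SimpleGraph V) [DecidableRel T.Adj] (hT : T.IsTree) (t : V)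
    (w : Sym2 V → ℝ) (hw : ∀ e ∈ T.edgeSet, 1 ≤ w e)
    (B R : Finset V) (α : ℝ) (hα0 : 0 ≤ α) (hα1 : α ≤ 1) :
    ∃ c : ℝ,
      IsLeast { c' : ℝ | ∃ lab : Sym2 V → Finset ℕ,
        (∀ e, e ∉ T.edgeSet → lab e = ∅) ∧
        α * (B.card : ℝ) ≤ (Set.ncard {u : V | u ∈ B ∧
          TemporallyReachable (inducedTemporalEdges T lab) u t} : ℝ) ∧
        α * (R.card : ℝ) ≤ (Set.ncard {u : V | u ∈ R ∧
          TemporallyReachable (inducedTemporalEdges T lab) u t} : ℝ) ∧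
        c' = ∑ e ∈ T.edgeFinset, ((lab e).card : ℝ) * w e } c ∧
      IsLeast { c' : ℝ | ∃ s : Finset V,
        t ∈ s ∧ (SimpleGraph.induce (s : Set V) T).Connected ∧
        α * (B.card : ℝ) ≤ ((s ∩ B).card : ℝ) ∧
        α * (R.card : ℝ) ≤ ((s ∩ R).card : ℝ) ∧
        c' = ∑ e ∈ T.edgeFinset,
          ({e' : Sym2 V | ∀ x ∈ e', x ∈ s} : Set (Sym2 V)).indicator w e } c := by
  classical
  set N := Fintype.card V with hN
  set f : Finset V → ℝ := fun s => ∑ e ∈ T.edgeFinset,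
      ({e' : Sym2 V | ∀ x ∈ e', x ∈ s} : Set (Sym2 V)).indicator w e with hf
  set S2 : Set ℝ := { c' : ℝ | ∃ s : Finset V,
        t ∈ s ∧ (SimpleGraph.induce (s : Set V) T).Connected ∧
        α * (B.card : ℝ) ≤ ((s ∩ B).card : ℝ) ∧
        α * (R.card : ℝ) ≤ ((s ∩ R).card : ℝ) ∧
        c' = f s } with hS2
  -- S2 is finite and nonempty, hence has a least element
  have hfin : S2.Finite := by
    apply (Set.finite_range f).subset
    rintro c' ⟨s, -, -, -, -, rfl⟩
    exact ⟨s, rfl⟩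
  have hne : S2.Nonempty := by
    refine ⟨f Finset.univ, Finset.univ, Finset.mem_univ t, ?_, ?_, ?_, rfl⟩
    · rw [Finset.coe_univ]
      apply induce_connected_of_walks (Set.mem_univ t)
      intro u _
      exact ⟨(hT.isConnected u t).some, fun x _ => Set.mem_univ x⟩
    · rw [Finset.univ_inter]
      exact mul_le_of_le_one_left (Nat.cast_nonneg _) hα1
    · rw [Finset.univ_inter]
      exact mul_le_of_le_one_left (Nat.cast_nonneg _) hα1
  obtain ⟨c, hc⟩ : ∃ c, IsLeast S2 c := by
    refine ⟨hfin.toFinset.min' (by simpa using hne), ?_, ?_⟩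
    · simpa [Set.Finite.mem_toFinset] using hfin.toFinset.min'_mem (by simpa using hne)
    · intro b hb
      exact hfin.toFinset.min'_le b (by simpa [Set.Finite.mem_toFinset] using hb)
  refine ⟨c, ⟨?_, ?_⟩, hc⟩
  · -- c is attained in the first (temporal) problem
    obtain ⟨s, hts, hconn, hsB, hsR, hcs⟩ := hc.1
    -- build the canonical labeling
    obtain ⟨lab, hempty, hreach, hcost⟩ :
        ∃ lab : Sym2 V → Finset ℕ,
          (∀ e, e ∉ T.edgeSet → lab e = ∅) ∧
          (∀ u ∈ s, TemporallyReachable (inducedTemporalEdges T lab) u t) ∧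
          (∀ e ∈ T.edgeFinset, ((lab e).card : ℝ) * w e =
            ({e' : Sym2 V | ∀ x ∈ e', x ∈ s} : Set (Sym2 V)).indicator w e) := by
      set d : Sym2 V → ℕ := Sym2.lift ⟨fun x y => min (T.dist x t) (T.dist y t),
        fun x y => by simp [min_comm]⟩ with hd
      refine ⟨fun e => if e ∈ T.edgeSet ∧ ∀ x ∈ e, x ∈ s then {N - d e} else ∅,
        ?_, ?_, ?_⟩
      · intro e he
        simp [he]
      · intro u hu
        obtain ⟨p, hp, hps⟩ := exists_path_support_subset hconn
          (Finset.mem_coe.mpr hu) (Finset.mem_coe.mpr hts)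
        have hplen : p.length < N := hp.length_lt
        refine Or.inr ⟨p.length, fun i => p.getVert i, fun i => N - p.length + i + 1,
          p.getVert_zero, by simpa using p.getVert_length, ?_, ?_⟩
        · intro i j hij
          have hij' : (i : ℕ) < (j : ℕ) := hij
          show N - p.length + (i : ℕ) + 1 < N - p.length + (j : ℕ) + 1
          omega
        · intro i
          have hil : (i : ℕ) < p.length := i.isLt
          have hadj := p.adj_getVert_succ hil
          have hmem : ∀ k : ℕ, k ≤ p.length → p.getVert k ∈ s := fun k hk =>
            Finset.mem_coe.mp (hps _ (Walk.mem_support_iff_exists_getVert.mpr ⟨k, rfl, hk⟩))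
          have hxy : ∀ z ∈ s(p.getVert i, p.getVert ((i : ℕ) + 1)), z ∈ s := by
            intro z hz
            rcases Sym2.mem_iff.mp hz with rfl | rfl
            · exact hmem _ hil.le
            · exact hmem _ hil
          have hdist : d s(p.getVert i, p.getVert ((i : ℕ) + 1)) = p.length - ((i : ℕ) + 1) := by
            rw [hd]
            show min (T.dist (p.getVert i) t) (T.dist (p.getVert ((i : ℕ) + 1)) t) = _
            rw [tree_dist_getVert hT p hp, tree_dist_getVert hT p hp]
            omega
          refine ⟨?_, ?_⟩
          · show s(_, _) ∈ T.edgeSet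
            simp only [Fin.coe_castSucc, Fin.val_succ]
            exact hadj
          · show _ ∈ if _ then _ else _
            simp only [Fin.coe_castSucc, Fin.val_succ]
            rw [if_pos ⟨hadj, hxy⟩, hdist, Finset.mem_singleton]
            omega
      · intro e he
        have he' : e ∈ T.edgeSet := SimpleGraph.mem_edgeFinset.mp he
        show ((if e ∈ T.edgeSet ∧ ∀ x ∈ e, x ∈ s then ({N - d e} : Finset ℕ) else ∅).card : ℝ)
            * w e = ({e' : Sym2 V | ∀ x ∈ e', x ∈ s} : Set (Sym2 V)).indicator w e
        by_cases hcond : ∀ x ∈ e, x ∈ s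
        · rw [if_pos ⟨he', hcond⟩,
            Set.indicator_of_mem (show e ∈ {e' : Sym2 V | ∀ x ∈ e', x ∈ s} from hcond)]
          simp
        · rw [if_neg (fun h => hcond h.2),
            Set.indicator_of_notMem (show e ∉ {e' : Sym2 V | ∀ x ∈ e', x ∈ s} from hcond)]
          simp
    refine ⟨lab, hempty, ?_, ?_, ?_⟩
    · refine hsB.trans ?_
      have hsub : ↑(s ∩ B) ⊆ {u : V | u ∈ B ∧
          TemporallyReachable (inducedTemporalEdges T lab) u t} := by
        intro u hu
        rw [Finset.mem_coe, Finset.mem_inter] at hu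
        exact ⟨hu.2, hreach u hu.1⟩
      have := Set.ncard_le_ncard hsub (Set.toFinite _)
      rw [Set.ncard_coe_finset] at this
      exact_mod_cast this
    · refine hsR.trans ?_
      have hsub : ↑(s ∩ R) ⊆ {u : V | u ∈ R ∧
          TemporallyReachable (inducedTemporalEdges T lab) u t} := by
        intro u hu
        rw [Finset.mem_coe, Finset.mem_inter] at hu
        exact ⟨hu.2, hreach u hu.1⟩
      have := Set.ncard_le_ncard hsub (Set.toFinite _)
      rw [Set.ncard_coe_finset] at this
      exact_mod_cast this
    · rw [hcs]
      exact (Finset.sum_congr rfl hcost).symm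
  · -- c is a lower bound for the temporal problem
    rintro c' ⟨lab, hempty, hB', hR', rfl⟩
    set reach : Set V := {u : V | TemporallyReachable (inducedTemporalEdges T lab) u t}
      with hreachdef
    set s' : Finset V := (Set.toFinite reach).toFinset with hs'
    have hcoe : (s' : Set V) = reach := Set.Finite.coe_toFinset _
    have hmem' : ∀ u, u ∈ s' ↔ TemporallyReachable (inducedTemporalEdges T lab) u t := by
      intro u
      rw [hs', Set.Finite.mem_toFinset]
      rfl
    have hts' : t ∈ s' := (hmem' t).mpr (Or.inl rfl)
    have hBeq : {u : V | u ∈ B ∧ TemporallyReachable (inducedTemporalEdges T lab) u t}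
        = ↑(s' ∩ B) := by
      ext u
      simp only [Set.mem_setOf_eq, Finset.coe_inter, Set.mem_inter_iff, Finset.mem_coe,
        hmem' u]
      tauto
    have hReq : {u : V | u ∈ R ∧ TemporallyReachable (inducedTemporalEdges T lab) u t}
        = ↑(s' ∩ R) := by
      ext u
      simp only [Set.mem_setOf_eq, Finset.coe_inter, Set.mem_inter_iff, Finset.mem_coe,
        hmem' u]
      tauto
    have hfs' : f s' ∈ S2 := by
      refine ⟨s', hts', ?_, ?_, ?_, rfl⟩
      · rw [hcoe]
        have htr : t ∈ reach := Or.inl rfl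
        apply induce_connected_of_walks htr
        intro u hu
        obtain ⟨W, hWs, -⟩ := temporal_reach_walk hu
        exact ⟨W, hWs⟩
      · rw [hBeq, Set.ncard_coe_finset] at hB'
        exact hB'
      · rw [hReq, Set.ncard_coe_finset] at hR'
        exact hR'
    refine (hc.2 hfs').trans ?_
    apply Finset.sum_le_sum
    intro e he
    have he' : e ∈ T.edgeSet := SimpleGraph.mem_edgeFinset.mp he
    have hwe : (1 : ℝ) ≤ w e := hw e he'
    by_cases hcond : ∀ x ∈ e, x ∈ s'
    · -- lab e is nonempty by the bridge argument
      have hlabne : (lab e).Nonempty := by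
        obtain ⟨⟨x, y⟩, rfl⟩ := e.exists_rep
        have hx : TemporallyReachable (inducedTemporalEdges T lab) x t :=
          (hmem' x).mp (hcond x (Sym2.mem_mk_left x y))
        have hy : TemporallyReachable (inducedTemporalEdges T lab) y t :=
          (hmem' y).mp (hcond y (Sym2.mem_mk_right x y))
        obtain ⟨Wx, -, hex⟩ := temporal_reach_walk hx
        obtain ⟨Wy, -, hey⟩ := temporal_reach_walk hy
        by_cases hmx : s(x, y) ∈ Wx.edges
        · exact hex _ hmx
        by_cases hmy : s(x, y) ∈ Wy.edges
        · exact hey _ hmy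
        exfalso
        have hb : T.IsBridge s(x, y) :=
          isAcyclic_iff_forall_edge_isBridge.mp hT.IsAcyclic he'
        rw [isBridge_iff_adj_and_forall_walk_mem_edges] at hb
        have := hb (Wx.append Wy.reverse)
        rw [Walk.edges_append, List.mem_append, Walk.edges_reverse, List.mem_reverse] at this
        tauto
      rw [Set.indicator_of_mem (show e ∈ {e' : Sym2 V | ∀ x ∈ e', x ∈ s'} from hcond)]
      have h1 : (1 : ℝ) ≤ ((lab e).card : ℝ) := by
        exact_mod_cast Nat.one_le_iff_ne_zero.mpr (Finset.card_ne_zero_of_mem hlabne.choose_spec)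
      nlinarith
    · rw [Set.indicator_of_notMem
        (show e ∉ {e' : Sym2 V | ∀ x ∈ e', x ∈ s'} from hcond)]
      exact mul_nonneg (Nat.cast_nonneg _) (by linarith)
end

section
/- Consider the set-cover gadget graph for an instance (U, 𝒮) with |U| = m and parameter L ≥ 1. Let λ be a temporal labeling of the gadget graph under which the terminal r is temporally reachable from every element node t_j, and let F denote the number of indices i ∈ [n] whose chain is fully labeled, i.e., each of the L+1 chain edges {s_i, w_{i,1}}, …, {w_{i,L}, r} carries at least one label under λ. Then the cost of λ satisfies |λ| ≥ m + (L+1)·F. -/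
/-- The nodes of the set-cover gadget graph: the terminal `r`, a set node `s i` for each
`i ∈ [n]`, an element node `t j` for each `j ∈ [m]`, and chain nodes `w i k` for each
`i ∈ [n]` and `k : Fin L` (the node `w i k` represents the paper's `w_{i,k+1}`). -/
inductive GV (n m L : ℕ) : Type
  | r : GV n m L
  | s (i : Fin n) : GV n m L
  | t (j : Fin m) : GV n m L
  | w (i : Fin n) (k : Fin L) : GV n m L
  deriving DecidableEq, Fintype

/-- The edge set of the set-cover gadget graph: `{t j, s i}` whenever `u_j ∈ S_i`, and
for each `i` the `L+1` chain edges `{s_i, w_{i,1}}, {w_{i,1}, w_{i,2}}, …,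
{w_{i,L-1}, w_{i,L}}, {w_{i,L}, r}`. -/
def gadgetEdges (n m L : ℕ) (S : Fin n → Finset (Fin m)) : Set (Sym2 (GV n m L)) :=
  {e | (∃ i j, j ∈ S i ∧ e = s(GV.t j, GV.s i)) ∨
       (∃ (i : Fin n) (k : Fin L), (k : ℕ) = 0 ∧ e = s(GV.s i, GV.w i k)) ∨
       (∃ (i : Fin n) (k k' : Fin L), (k' : ℕ) = (k : ℕ) + 1 ∧
          e = s(GV.w i k, GV.w i k')) ∨
       (∃ (i : Fin n) (k : Fin L), (k : ℕ) = L - 1 ∧ e = s(GV.w i k, GV.r))}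

/-- The temporal edges induced by a temporal labeling `lab` of a static graph with edge
set `E`. -/
def inducedTemporal {V : Type*} (E : Set (Sym2 V)) (lab : Sym2 V → Finset ℕ) :
    Set (Sym2 V × ℕ) :=
  {q | q.1 ∈ E ∧ q.2 ∈ lab q.1}

/-- The cost `|λ|` of a temporal labeling: the total number of assigned timestamps. -/
def labCost {n m L : ℕ} (lab : Sym2 (GV n m L) → Finset ℕ) : ℕ :=
  ∑ e : Sym2 (GV n m L), (lab e).card


def chainEdge {n m : ℕ} {L : ℕ} (hL : 1 ≤ L) (i : Fin n) (k : Fin (L + 1)) :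
    Sym2 (GV n m L) :=
  if (k : ℕ) = 0 then s(GV.s i, GV.w i ⟨0, hL⟩)
  else if h2 : (k : ℕ) = L then s(GV.w i ⟨L - 1, by omega⟩, GV.r)
  else s(GV.w i ⟨(k : ℕ) - 1, by have := k.isLt; omega⟩,
         GV.w i ⟨(k : ℕ), by have := k.isLt; omega⟩)

lemma chainEdge_inj {n m L : ℕ} (hL : 1 ≤ L) {i i' : Fin n} {k k' : Fin (L + 1)}
    (h : chainEdge (m := m) hL i k = chainEdge hL i' k') : i = i' ∧ k = k' := by
  have hk := k.isLt
  have hk' := k'.isLt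
  unfold chainEdge at h
  split_ifs at h <;> simp only [Sym2.eq_iff, Fin.ext_iff, GV.w.injEq, GV.s.injEq, reduceCtorEq, and_false, false_and, false_or, or_false] at h ⊢ <;> omega

lemma chainEdge_no_t {n m L : ℕ} (hL : 1 ≤ L) (i : Fin n) (k : Fin (L + 1))
    (j : Fin m) (i' : Fin n) : chainEdge hL i k ≠ s(GV.t j, GV.s i') := by
  unfold chainEdge
  split_ifs <;> simp [Sym2.eq_iff]

lemma exists_first {n m L : ℕ} (S : Fin n → Finset (Fin m))
    (lab : Sym2 (GV n m L) → Finset ℕ) (j : Fin m)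
    (h : TemporallyReachable (inducedTemporal (gadgetEdges n m L S) lab) (GV.t j) GV.r) :
    ∃ i : Fin n, (lab s(GV.t j, GV.s i)).Nonempty := by
  rcases h with h | ⟨p, vtx, ts, h0, hlast, _, hmem⟩
  · exact absurd h (by simp)
  cases p with
  | zero =>
      rw [show Fin.last 0 = 0 from rfl, h0] at hlast
      exact absurd hlast (by simp)
  | succ p =>
      have hm := hmem 0
      rw [Fin.castSucc_zero, h0] at hm
      obtain ⟨hedge, hts⟩ := hm
      rcases hedge with ⟨i, j', hj, heq⟩ | ⟨i, k, _, heq⟩ | ⟨i, k, k', _, heq⟩ |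
        ⟨i, k, _, heq⟩
      · rw [Sym2.eq_iff] at heq
        rcases heq with ⟨h1, h2⟩ | ⟨h1, h2⟩
        · rw [h2] at hts; exact ⟨i, ts 0, hts⟩
        · exact absurd h1 (by simp)
      · simp [Sym2.eq_iff] at heq
      · simp [Sym2.eq_iff] at heq
      · simp [Sym2.eq_iff] at heq

set_option maxHeartbeats 1000000 in
/-- let `lab` be a temporal labeling of the gadget graph under which `r`
is temporally reachable from every element node, and let `F` be the number of indices
`i` whose chain is fully labeled (each of the `L+1` chain edges carries at least one
label).  Then the cost of `lab` is at least `m + (L+1)·F`. -/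
theorem feasible_labeling_cost_lower_bound (n m L : ℕ) (hL : 1 ≤ L)
    (S : Fin n → Finset (Fin m)) (hcover : ∀ j, ∃ i, j ∈ S i)
    (lab : Sym2 (GV n m L) → Finset ℕ)
    (hsupp : ∀ e, e ∉ gadgetEdges n m L S → lab e = ∅)
    (hreach : ∀ j : Fin m, TemporallyReachable (inducedTemporal (gadgetEdges n m L S) lab)
      (GV.t j) GV.r)
    (F : ℕ)
    (hF : F = Set.ncard {i : Fin n |
      (lab s(GV.s i, GV.w i ⟨0, by omega⟩)).Nonempty ∧
      (∀ (k : ℕ) (_h1 : 1 ≤ k) (_h2 : k ≤ L - 1),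
        (lab s(GV.w i ⟨k - 1, by omega⟩, GV.w i ⟨k, by omega⟩)).Nonempty) ∧
      (lab s(GV.w i ⟨L - 1, by omega⟩, GV.r)).Nonempty}) :
    m + (L + 1) * F ≤ labCost lab := by
    classical
  set P : Fin n → Prop := fun i =>
    (lab s(GV.s i, GV.w i ⟨0, by omega⟩)).Nonempty ∧
    (∀ (k : ℕ) (_h1 : 1 ≤ k) (_h2 : k ≤ L - 1),
      (lab s(GV.w i ⟨k - 1, by omega⟩, GV.w i ⟨k, by omega⟩)).Nonempty) ∧
    (lab s(GV.w i ⟨L - 1, by omega⟩, GV.r)).Nonempty with hPdef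
  set C : Finset (Fin n) := Finset.univ.filter P with hCdef
  have hFC : F = C.card := by
    rw [hF, ← Set.ncard_coe_finset]
    congr 1
    ext i
    simp only [hCdef, Finset.coe_filter, Finset.mem_univ, true_and, Set.mem_setOf_eq,
      hPdef]
  choose f hf using fun j : Fin m => exists_first S lab j (hreach j)
  set A : Finset (Sym2 (GV n m L)) :=
    Finset.univ.image (fun j : Fin m => s(GV.t j, GV.s (f j))) with hAdef
  set B : Finset (Sym2 (GV n m L)) :=
    C.biUnion (fun i => Finset.univ.image (chainEdge (m := m) hL i)) with hBdef
  have hAcard : A.card = m := by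
    rw [hAdef, Finset.card_image_of_injective _ ?_, Finset.card_univ, Fintype.card_fin]
    intro j j' hjj
    simp only [Sym2.eq_iff, GV.t.injEq, GV.s.injEq] at hjj
    rcases hjj with ⟨h1, _⟩ | ⟨h1, _⟩
    · exact h1
    · exact absurd h1 (by simp)
  have hinner : ∀ i : Fin n, (Finset.univ.image (chainEdge (m := m) hL i)).card = L + 1 := by
    intro i
    rw [Finset.card_image_of_injective _ (fun k k' h => (chainEdge_inj hL h).2),
      Finset.card_univ, Fintype.card_fin]
  have hBcard : B.card = C.card * (L + 1) := by
    rw [hBdef, Finset.card_biUnion]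
    · rw [Finset.sum_congr rfl (fun i _ => hinner i), Finset.sum_const, smul_eq_mul]
    · intro i _ i' _ hii
      rw [Function.onFun, Finset.disjoint_left]
      rintro e he he'
      simp only [Finset.mem_image, Finset.mem_univ, true_and] at he he'
      obtain ⟨k, hk⟩ := he
      obtain ⟨k', hk'⟩ := he'
      exact hii (chainEdge_inj hL (hk.trans hk'.symm)).1
  have hAB : Disjoint A B := by
    rw [Finset.disjoint_left]
    rintro e he he'
    simp only [hAdef, hBdef, Finset.mem_image, Finset.mem_biUnion, Finset.mem_univ,
      true_and] at he he'
    obtain ⟨j, hj⟩ := he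
    obtain ⟨i, _, k, hk⟩ := he'
    exact chainEdge_no_t hL i k j (f j) (hk.trans hj.symm)
  have hchain_ne : ∀ i : Fin n, P i → ∀ k : Fin (L + 1),
      (lab (chainEdge (m := m) hL i k)).Nonempty := by
    intro i hPi k
    obtain ⟨h1, h2, h3⟩ := hPi
    unfold chainEdge
    split_ifs with hk0 hkL
    · exact h1
    · exact h3
    · exact h2 (k : ℕ) (by omega) (by have := k.isLt; omega)
  have hne : ∀ e ∈ A ∪ B, 1 ≤ (lab e).card := by
    intro e he
    rw [Finset.mem_union] at he
    have : (lab e).Nonempty := by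
      rcases he with he | he
      · simp only [hAdef, Finset.mem_image, Finset.mem_univ, true_and] at he
        obtain ⟨j, hj⟩ := he
        rw [← hj]
        exact hf j
      · simp only [hBdef, Finset.mem_biUnion, Finset.mem_image, Finset.mem_univ,
          true_and] at he
        obtain ⟨i, hi, k, hk⟩ := he
        rw [← hk]
        exact hchain_ne i ((Finset.mem_filter.1 hi).2) k
    exact Finset.card_pos.2 this
  calc m + (L + 1) * F = (A ∪ B).card := by
        rw [Finset.card_union_of_disjoint hAB, hAcard, hBcard, hFC, mul_comm]
    _ ≤ ∑ e ∈ A ∪ B, (lab e).card := by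
        calc (A ∪ B).card = ∑ _e ∈ A ∪ B, 1 := by
              rw [Finset.sum_const, smul_eq_mul, mul_one]
          _ ≤ ∑ e ∈ A ∪ B, (lab e).card := Finset.sum_le_sum hne
    _ ≤ labCost lab := Finset.sum_le_sum_of_subset (Finset.subset_univ _)
end
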